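/- Let G ∈ F[z]^{k×n} have controller canonical form (A,B,C,D). If u = (u^{(1)},…,u^{(k)}) ∈ F[z]^k is a polynomial input, then the state sequence x = uB(z^{-1}I − A)^{-1} is polynomial and deg x = max{ γ_i + deg u^{(i)} : 1 ≤ i ≤ k, γ_i ≠ 0 }. -/

import Mathlib

open Polynomial Matrix
open scoped Classical

/-- Embedding of polynomials into formal Laurent series. -/
noncomputable def polyToLS (F : Type*) [Field F] : Polynomial F →+* LaurentSeries F :=
  (HahnSeries.ofPowerSeries ℤ F).comp Polynomial.coeToPowerSeries.ringHom

/-- The convolutional code generated by `G`: all `u·G` with `u` a Laurent-series row vector. -/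
noncomputable def convCode {F : Type*} [Field F] {k n : ℕ}
    (G : Matrix (Fin k) (Fin n) (Polynomial F)) : Set (Fin n → LaurentSeries F) :=
  {v | ∃ u : Fin k → LaurentSeries F, v = Matrix.vecMul u (G.map (polyToLS F))}

/-- `G` is basic: it has a polynomial right inverse. -/
def IsBasic {F : Type*} [Field F] {k n : ℕ} (G : Matrix (Fin k) (Fin n) (Polynomial F)) : Prop :=
  ∃ H : Matrix (Fin n) (Fin k) (Polynomial F), G * H = 1

/-- The overall constraint length: maximal degree of a (full-size) `k`-minor of `G`. -/
noncomputable def ocl {F : Type*} [Field F] {k n : ℕ}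
    (G : Matrix (Fin k) (Fin n) (Polynomial F)) : ℕ :=
  Finset.univ.sup fun f : Fin k ↪ Fin n => ((G.submatrix id f).det).natDegree

/-- The degree of the `i`-th row of `G` (in `WithBot ℕ`, so `deg 0 = ⊥`). -/
noncomputable def rowDeg {F : Type*} [Field F] {k n : ℕ}
    (G : Matrix (Fin k) (Fin n) (Polynomial F)) (i : Fin k) : WithBot ℕ :=
  Finset.univ.sup fun j => (G i j).degree

/-- The state-index set of the controller canonical form for row degrees `γ`. -/
abbrev StateIdx {k : ℕ} (γ : Fin k → ℕ) := Σ i : Fin k, Fin (γ i)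

/-- State matrix `A` of the controller canonical form (block diagonal nilpotent shifts). -/
def ccfA (F : Type*) [Field F] {k : ℕ} (γ : Fin k → ℕ) :
    Matrix (StateIdx γ) (StateIdx γ) F :=
  fun s t => if s.1 = t.1 ∧ (t.2 : ℕ) = (s.2 : ℕ) + 1 then 1 else 0

/-- Input matrix `B` of the controller canonical form. -/
def ccfB (F : Type*) [Field F] {k : ℕ} (γ : Fin k → ℕ) :
    Matrix (Fin k) (StateIdx γ) F :=
  fun i s => if s.1 = i ∧ (s.2 : ℕ) = 0 then 1 else 0

/-- Output matrix `C` of the controller canonical form: higher coefficient rows of `G`. -/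
noncomputable def ccfC {F : Type*} [Field F] {k n : ℕ} (γ : Fin k → ℕ)
    (G : Matrix (Fin k) (Fin n) (Polynomial F)) : Matrix (StateIdx γ) (Fin n) F :=
  fun s j => (G s.1 j).coeff ((s.2 : ℕ) + 1)

/-- Feedthrough matrix `D`: the constant coefficient matrix of `G`. -/
noncomputable def ccfD {F : Type*} [Field F] {k n : ℕ}
    (G : Matrix (Fin k) (Fin n) (Polynomial F)) : Matrix (Fin k) (Fin n) F :=
  fun i j => (G i j).coeff 0

/-- Hamming weight of a vector. -/
noncomputable def hamWt {F : Type*} [Field F] {ι : Type*} (v : ι → F) : ℕ :=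
  Nat.card {j : ι // v j ≠ 0}


set_option synthInstance.maxHeartbeats 1000000
set_option maxHeartbeats 1000000

noncomputable def Minv (F : Type*) [Field F] {k : ℕ} (γ : Fin k → ℕ) :
    Matrix (StateIdx γ) (StateIdx γ) (RatFunc F) :=
  fun s t => if s.1 = t.1 ∧ (s.2 : ℕ) ≤ (t.2 : ℕ) then
    (RatFunc.X : RatFunc F) ^ ((t.2 : ℕ) - (s.2 : ℕ) + 1) else 0

lemma sum_delta {K : Type*} [Semiring K] {k : ℕ} (γ : Fin k → ℕ) (i : Fin k) (m : ℕ)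
    (g : StateIdx γ → K) :
    (∑ r : StateIdx γ, (if r.1 = i ∧ (r.2 : ℕ) = m then (1 : K) else 0) * g r) =
    if h : m < γ i then g ⟨i, ⟨m, h⟩⟩ else 0 := by
  split
  · rename_i h
    rw [Finset.sum_eq_single (⟨i, ⟨m, h⟩⟩ : StateIdx γ)]
    · simp
    · rintro ⟨r1, r2⟩ _ hr
      rw [if_neg, zero_mul]
      rintro ⟨rfl, h2⟩
      exact hr (by simp [Sigma.ext_iff, Fin.ext_iff]; exact h2)
    · simp
  · rename_i h
    apply Finset.sum_eq_zero
    rintro ⟨r1, r2⟩ _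
    rw [if_neg, zero_mul]
    rintro ⟨rfl, h2⟩
    exact h (h2 ▸ r2.isLt)

lemma sum_delta' {K : Type*} [Semiring K] {k : ℕ} (γ : Fin k → ℕ) (i : Fin k) (m : ℕ)
    (g : StateIdx γ → K) :
    (∑ r : StateIdx γ, (if i = r.1 ∧ (r.2 : ℕ) = m then (1 : K) else 0) * g r) =
    if h : m < γ i then g ⟨i, ⟨m, h⟩⟩ else 0 := by
  rw [← sum_delta γ i m g]
  refine Finset.sum_congr rfl fun r _ => ?_
  rw [if_congr (and_congr_left' eq_comm) rfl rfl]

lemma M_mul_Minv (F : Type*) [Field F] {k : ℕ} (γ : Fin k → ℕ) :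
    (((RatFunc.X : RatFunc F)⁻¹ • (1 : Matrix (StateIdx γ) (StateIdx γ) (RatFunc F)) -
      (ccfA F γ).map (algebraMap F (RatFunc F))) * Minv F γ) = 1 := by
  ext s t
  rw [Matrix.mul_apply]
  have hA : ∀ r, ((ccfA F γ).map (algebraMap F (RatFunc F))) s r =
      if s.1 = r.1 ∧ (r.2 : ℕ) = (s.2 : ℕ) + 1 then 1 else 0 := by
    intro r; simp [ccfA, Matrix.map_apply, apply_ite (algebraMap F (RatFunc F))]
  simp only [Matrix.sub_apply, Matrix.smul_apply, Matrix.one_apply, hA, sub_mul,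
    Finset.sum_sub_distrib, smul_eq_mul, mul_ite, mul_one, mul_zero, ite_mul, zero_mul, one_mul]
  rw [Finset.sum_ite_eq Finset.univ s (fun r => (RatFunc.X : RatFunc F)⁻¹ * Minv F γ r t),
    if_pos (Finset.mem_univ s)]
  have hsum := sum_delta' γ s.1 ((s.2 : ℕ) + 1) (fun r => Minv F γ r t)
  simp only [ite_mul, one_mul, zero_mul] at hsum
  rw [hsum]
  clear hA hsum
  obtain ⟨i, a⟩ := s
  obtain ⟨i', b⟩ := t
  have ha := a.isLt
  have hb := b.isLt
  by_cases h1 : i = i'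
  · subst h1
    have hiff : ((⟨i, a⟩ : StateIdx γ) = ⟨i, b⟩) ↔ ((a : ℕ) = (b : ℕ)) := by
      simp [Sigma.ext_iff, Fin.ext_iff]
    by_cases hlt : (a : ℕ) + 1 < γ i
    · rw [dif_pos hlt]
      simp only [Minv, Matrix.one_apply, hiff, eq_self_iff_true, true_and]
      split_ifs with h2 h3 h4 h5 h6 h7 h8 <;> try (exfalso; omega)
      · have he : (b : ℕ) - (a : ℕ) + 1 = ((b : ℕ) - ((a : ℕ) + 1) + 1) + 1 := by omega
        rw [he, pow_succ', ← mul_assoc, inv_mul_cancel₀ RatFunc.X_ne_zero, one_mul, sub_self]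
      · have he : (b : ℕ) - (a : ℕ) + 1 = 1 := by omega
        rw [he, pow_one, inv_mul_cancel₀ RatFunc.X_ne_zero, sub_zero]
      · simp
    · rw [dif_neg hlt]
      simp only [Minv, Matrix.one_apply, hiff, eq_self_iff_true, true_and]
      split_ifs with h2 h3 h4 <;> try (exfalso; omega)
      · have he : (b : ℕ) - (a : ℕ) + 1 = 1 := by omega
        rw [he, pow_one, inv_mul_cancel₀ RatFunc.X_ne_zero, sub_zero]
      · simp
  · simp [Minv, Matrix.one_apply, Sigma.ext_iff, h1]


theorem stmt7 {F : Type*} [Field F] {k n : ℕ}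
    (G : Matrix (Fin k) (Fin n) (Polynomial F)) (γ : Fin k → ℕ)
    (hγ : ∀ i, rowDeg G i = (γ i : WithBot ℕ))
    (u : Fin k → Polynomial F)
    (x : StateIdx γ → RatFunc F)
    (hx : x = Matrix.vecMul (fun i => algebraMap (Polynomial F) (RatFunc F) (u i))
      (((ccfB F γ).map (algebraMap F (RatFunc F))) *
        ((RatFunc.X : RatFunc F)⁻¹ • (1 : Matrix (StateIdx γ) (StateIdx γ) (RatFunc F)) -
          (ccfA F γ).map (algebraMap F (RatFunc F)))⁻¹)) :
    ∃ xp : StateIdx γ → Polynomial F,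
      (∀ s, algebraMap (Polynomial F) (RatFunc F) (xp s) = x s) ∧
      (Finset.univ.sup fun s : StateIdx γ => (xp s).degree) =
        (Finset.univ.filter fun i : Fin k => γ i ≠ 0).sup
          (fun i => (u i).degree + (γ i : WithBot ℕ)) := by
  refine ⟨fun s => u s.1 * Polynomial.X ^ ((s.2 : ℕ) + 1), ?_, ?_⟩
  · intro s
    rw [hx, Matrix.inv_eq_right_inv (M_mul_Minv F γ)]
    simp only [Matrix.vecMul, dotProduct, Matrix.mul_apply, Finset.mul_sum]
    have hB : ∀ i : Fin k,
        (∑ t : StateIdx γ, ((ccfB F γ).map (algebraMap F (RatFunc F))) i t * Minv F γ t s)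
        = if h : 0 < γ i then Minv F γ ⟨i, ⟨0, h⟩⟩ s else 0 := by
      intro i
      rw [← sum_delta γ i 0 (fun t => Minv F γ t s)]
      refine Finset.sum_congr rfl fun t _ => ?_
      simp [ccfB, Matrix.map_apply, apply_ite (algebraMap F (RatFunc F))]
    rw [show (∑ i : Fin k, ∑ t : StateIdx γ,
        (algebraMap (Polynomial F) (RatFunc F) (u i)) *
          (((ccfB F γ).map (algebraMap F (RatFunc F))) i t * Minv F γ t s))
        = ∑ i : Fin k, (algebraMap (Polynomial F) (RatFunc F) (u i)) *
            (if h : 0 < γ i then Minv F γ ⟨i, ⟨0, h⟩⟩ s else 0) by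
      refine Finset.sum_congr rfl fun i _ => ?_
      rw [← Finset.mul_sum, hB i]]
    rw [Finset.sum_eq_single s.1]
    · rw [dif_pos s.2.pos]
      have : Minv F γ ⟨s.1, ⟨0, s.2.pos⟩⟩ s = (RatFunc.X : RatFunc F) ^ ((s.2 : ℕ) + 1) := by
        simp [Minv]
      rw [this, _root_.map_mul, map_pow, RatFunc.algebraMap_X]
    · intro i _ hi
      rw [show (if h : 0 < γ i then Minv F γ ⟨i, ⟨0, h⟩⟩ s else 0) = 0 by
        split
        · simp only [Minv]; rw [if_neg]; rintro ⟨h1, -⟩; exact hi h1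
        · rfl, mul_zero]
    · intro h; exact absurd (Finset.mem_univ _) h
  · have hdeg : ∀ s : StateIdx γ, (u s.1 * Polynomial.X ^ ((s.2 : ℕ) + 1)).degree
        = (u s.1).degree + (((s.2 : ℕ) + 1 : ℕ) : WithBot ℕ) := by
      intro s; rw [degree_mul, degree_X_pow]
    apply le_antisymm
    · apply Finset.sup_le
      intro s _
      rw [hdeg]
      refine Finset.le_sup_of_le (Finset.mem_filter.mpr ⟨Finset.mem_univ _, s.2.pos.ne'⟩) ?_
      exact add_le_add (le_refl _) (by exact_mod_cast Nat.succ_le_of_lt s.2.isLt)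
    · apply Finset.sup_le
      intro i hi
      have hpos : 0 < γ i := Nat.pos_of_ne_zero (Finset.mem_filter.mp hi).2
      have hle := Finset.le_sup (f := fun s : StateIdx γ =>
          (u s.1 * Polynomial.X ^ ((s.2 : ℕ) + 1)).degree)
        (Finset.mem_univ (⟨i, ⟨γ i - 1, by omega⟩⟩ : StateIdx γ))
      have hval : (u i).degree + ((γ i : ℕ) : WithBot ℕ)
          = (u i * Polynomial.X ^ ((((⟨γ i - 1, by omega⟩ : Fin (γ i))) : ℕ) + 1)).degree := by
        rw [degree_mul, degree_X_pow]
        congr 1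
        exact congrArg Nat.cast (by omega : γ i = γ i - 1 + 1)
      exact hval.le.trans hle
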